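/- There do not exist a probability space Ω and random variables A₀, A_{π/2}, A_π, B₀, C₀, C_{π/2}, D₀, D_{π/2} on Ω, each taking only the values 1 and −1, such that for all φ₁ ∈ {0, π/2, π} and all φ₃, φ₄ ∈ {0, π/2}, E[A_{φ₁} · B₀ · C_{φ₃} · D_{φ₄}] = −cos(φ₁ − φ₃ − φ₄). Equivalently, a family of ±1-valued observables A_{φ₁}, B_{φ₂}, C_{φ₃}, D_{φ₄} satisfying the GHZ correlation E[A_{φ₁}B_{φ₂}C_{φ₃}D_{φ₄}] = −cos(φ₁ + φ₂ − φ₃ − φ₄) admits no joint probability distribution of the eight listed random variables. -/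

import Mathlib

open MeasureTheory Real

lemma ghz_pm_mul (a b : ℝ) (ha : a = 1 ∨ a = -1) (hb : b = 1 ∨ b = -1) :
    a * b = 1 ∨ a * b = -1 := by
  rcases ha with h | h <;> rcases hb with h' | h' <;> simp [h, h']

lemma ghz_ae_eq {Ω : Type*} [MeasurableSpace Ω] (P : Measure Ω) [IsProbabilityMeasure P]
    (f : Ω → ℝ) (hm : Measurable f) (hv : ∀ ω, f ω = 1 ∨ f ω = -1) (ε : ℝ)
    (hε : ε = 1 ∨ ε = -1) (hi : ∫ ω, f ω ∂P = ε) : ∀ᵐ ω ∂P, f ω = ε := by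
  have hint : Integrable f P := by
    refine ⟨hm.aestronglyMeasurable, HasFiniteIntegral.of_bounded (C := 1) ?_⟩
    filter_upwards with ω
    rcases hv ω with h | h <;> simp [h]
  have hg : Integrable (fun ω => ε * f ω) P := hint.const_mul ε
  have hnn : 0 ≤ᵐ[P] fun ω => 1 - ε * f ω := by
    filter_upwards with ω
    rcases hv ω with h | h <;> rcases hε with h' | h' <;> simp [h, h']
  have hzero : ∫ ω, (1 - ε * f ω) ∂P = 0 := by
    rw [integral_sub (integrable_const 1) hg, integral_const_mul, hi]
    rcases hε with h' | h' <;> simp [h']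
  have := (integral_eq_zero_iff_of_nonneg_ae hnn ((integrable_const 1).sub hg)).mp hzero
  filter_upwards [this] with ω hω
  have hω' : (1 : ℝ) - ε * f ω = 0 := hω
  rcases hv ω with h | h <;> rcases hε with h' | h' <;>
    simp [h, h'] at hω' ⊢

lemma ghz_arith (a0 a1 a2 b c0 c1 d0 d1 : ℝ)
    (ha0 : a0 = 1 ∨ a0 = -1) (ha1 : a1 = 1 ∨ a1 = -1) (ha2 : a2 = 1 ∨ a2 = -1)
    (hb : b = 1 ∨ b = -1) (hc0 : c0 = 1 ∨ c0 = -1) (hc1 : c1 = 1 ∨ c1 = -1)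
    (hd0 : d0 = 1 ∨ d0 = -1) (hd1 : d1 = 1 ∨ d1 = -1)
    (h1 : a0 * b * c0 * d0 = -1) (h2 : a1 * b * c1 * d0 = -1)
    (h3 : a1 * b * c0 * d1 = -1) (h4 : a2 * b * c1 * d1 = -1)
    (h5 : a2 * b * c0 * d0 = 1) : False := by
  rcases ha0 with h | h <;> rcases ha1 with h' | h' <;> rcases ha2 with h'' | h'' <;>
    rcases hb with hB | hB <;> rcases hc0 with hC | hC <;> rcases hc1 with hC' | hC' <;>
    rcases hd0 with hD | hD <;> rcases hd1 with hD' | hD' <;>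
    subst h h' h'' hB hC hC' hD hD' <;> linarith

/-- Probabilistic GHZ theorem: there is no joint probability distribution for the eight
`±1`-valued observables `A₀, A_{π/2}, A_π, B₀, C₀, C_{π/2}, D₀, D_{π/2}` satisfying the
GHZ correlation `E[A_{φ₁} B₀ C_{φ₃} D_{φ₄}] = -cos (φ₁ - φ₃ - φ₄)` for
`φ₁ ∈ {0, π/2, π}` and `φ₃, φ₄ ∈ {0, π/2}`. Stated as: any probability space carrying
such random variables yields a contradiction. -/
theorem ghz_no_joint_distribution
    {Ω : Type*} [MeasurableSpace Ω] (P : Measure Ω) [IsProbabilityMeasure P]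
    (A : ℝ → Ω → ℝ) (B : ℝ → Ω → ℝ) (C : ℝ → Ω → ℝ) (D : ℝ → Ω → ℝ)
    (hAmeas : ∀ φ ∈ ({0, π / 2, π} : Set ℝ), Measurable (A φ))
    (hAval : ∀ φ ∈ ({0, π / 2, π} : Set ℝ), ∀ ω, A φ ω = 1 ∨ A φ ω = -1)
    (hBmeas : Measurable (B 0))
    (hBval : ∀ ω, B 0 ω = 1 ∨ B 0 ω = -1)
    (hCmeas : ∀ φ ∈ ({0, π / 2} : Set ℝ), Measurable (C φ))
    (hCval : ∀ φ ∈ ({0, π / 2} : Set ℝ), ∀ ω, C φ ω = 1 ∨ C φ ω = -1)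
    (hDmeas : ∀ φ ∈ ({0, π / 2} : Set ℝ), Measurable (D φ))
    (hDval : ∀ φ ∈ ({0, π / 2} : Set ℝ), ∀ ω, D φ ω = 1 ∨ D φ ω = -1)
    (hmom : ∀ φ₁ ∈ ({0, π / 2, π} : Set ℝ), ∀ φ₃ ∈ ({0, π / 2} : Set ℝ),
      ∀ φ₄ ∈ ({0, π / 2} : Set ℝ),
      ∫ ω, A φ₁ ω * B 0 ω * C φ₃ ω * D φ₄ ω ∂P = -Real.cos (φ₁ - φ₃ - φ₄)) :
    False := by
  have m0A : (0 : ℝ) ∈ ({0, π / 2, π} : Set ℝ) := by simp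
  have mhA : (π / 2 : ℝ) ∈ ({0, π / 2, π} : Set ℝ) := by simp
  have mpA : (π : ℝ) ∈ ({0, π / 2, π} : Set ℝ) := by simp
  have m0C : (0 : ℝ) ∈ ({0, π / 2} : Set ℝ) := by simp
  have mhC : (π / 2 : ℝ) ∈ ({0, π / 2} : Set ℝ) := by simp
  -- the five moment equations
  have e1 := hmom 0 m0A 0 m0C 0 m0C
  have e2 := hmom (π / 2) mhA (π / 2) mhC 0 m0C
  have e3 := hmom (π / 2) mhA 0 m0C (π / 2) mhC
  have e4 := hmom π mpA (π / 2) mhC (π / 2) mhC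
  have e5 := hmom π mpA 0 m0C 0 m0C
  rw [show (0 : ℝ) - 0 - 0 = 0 by ring, Real.cos_zero] at e1
  rw [show (π / 2 : ℝ) - π / 2 - 0 = 0 by ring, Real.cos_zero] at e2
  rw [show (π / 2 : ℝ) - 0 - π / 2 = 0 by ring, Real.cos_zero] at e3
  rw [show (π : ℝ) - π / 2 - π / 2 = 0 by ring, Real.cos_zero] at e4
  rw [show (π : ℝ) - 0 - 0 = π by ring, Real.cos_pi] at e5
  norm_num at e5
  -- turn each into an a.e. statement
  have key : ∀ (φ₁ : ℝ), φ₁ ∈ ({0, π / 2, π} : Set ℝ) → ∀ (φ₃ : ℝ), φ₃ ∈ ({0, π / 2} : Set ℝ) →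
      ∀ (φ₄ : ℝ), φ₄ ∈ ({0, π / 2} : Set ℝ) → ∀ (ε : ℝ), ε = 1 ∨ ε = -1 →
      (∫ ω, A φ₁ ω * B 0 ω * C φ₃ ω * D φ₄ ω ∂P = ε) →
      ∀ᵐ ω ∂P, A φ₁ ω * B 0 ω * C φ₃ ω * D φ₄ ω = ε := by
    intro φ₁ h1m φ₃ h3m φ₄ h4m ε hε hi
    refine ghz_ae_eq P _ ?_ ?_ ε hε hi
    · exact (((hAmeas φ₁ h1m).mul hBmeas).mul (hCmeas φ₃ h3m)).mul (hDmeas φ₄ h4m)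
    · intro ω
      exact ghz_pm_mul _ _ (ghz_pm_mul _ _ (ghz_pm_mul _ _ (hAval φ₁ h1m ω) (hBval ω))
        (hCval φ₃ h3m ω)) (hDval φ₄ h4m ω)
  have a1 := key 0 m0A 0 m0C 0 m0C (-1) (Or.inr rfl) e1
  have a2 := key (π / 2) mhA (π / 2) mhC 0 m0C (-1) (Or.inr rfl) e2
  have a3 := key (π / 2) mhA 0 m0C (π / 2) mhC (-1) (Or.inr rfl) e3
  have a4 := key π mpA (π / 2) mhC (π / 2) mhC (-1) (Or.inr rfl) e4
  have a5 := key π mpA 0 m0C 0 m0C 1 (Or.inl rfl) e5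
  have : ∀ᵐ ω ∂P, False := by
    filter_upwards [a1, a2, a3, a4, a5] with ω h1 h2 h3 h4 h5
    exact ghz_arith (A 0 ω) (A (π / 2) ω) (A π ω) (B 0 ω) (C 0 ω) (C (π / 2) ω)
      (D 0 ω) (D (π / 2) ω) (hAval 0 m0A ω) (hAval (π / 2) mhA ω) (hAval π mpA ω)
      (hBval ω) (hCval 0 m0C ω) (hCval (π / 2) mhC ω) (hDval 0 m0C ω) (hDval (π / 2) mhC ω)
      h1 h2 h3 h4 h5
  rcases this.exists with ⟨ω, hω⟩
  exact hω
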